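/- Let Λ be an N×N real diagonal matrix with diagonal entries 0 < λ = λ_1 ≤ λ_2 ≤ … ≤ λ_N, let T ≥ 1, let b_1, …, b_T ∈ ℝ^N satisfy ‖b_τ‖ ≤ 1 for all τ, and for t ≥ 1 define B_t := Λ + Σ_{τ=1}^{t−1} b_τ b_τᵀ. Let d be the effective dimension. Then for every t ≤ T + 1: ln( det(B_t) / det(Λ) ) ≤ 2 d ln( 1 + T/λ ). -/

import Mathlib

set_option autoImplicit false

open Matrix Finset

lemma trace_eq_sum_eig {n : Type*} [Fintype n] [DecidableEq n]
    {A : Matrix n n ℝ} (hA : A.IsHermitian) :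
    A.trace = ∑ i, hA.eigenvalues i := by
  rw [hA.trace_eq_sum_eigenvalues]
  simp

lemma det_le_prod_diag {n : Type*} [Fintype n] [DecidableEq n]
    {A : Matrix n n ℝ} (hA : A.PosSemidef) : A.det ≤ ∏ i, A i i := by
  by_cases hdiag : ∀ i, 0 < A i i
  · -- normalize
    set a : n → ℝ := fun i => A i i with ha
    set D : Matrix n n ℝ := Matrix.diagonal (fun i => 1 / Real.sqrt (a i)) with hD
    have hDH : Dᴴ = D := by
      ext i j
      by_cases h : i = j
      · subst h; simp [hD, Matrix.conjTranspose_apply, Matrix.diagonal_apply]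
      · simp [hD, Matrix.conjTranspose_apply, Matrix.diagonal_apply, h, Ne.symm h]
    have hB : (D * A * D).PosSemidef := by
      have := hA.mul_mul_conjTranspose_same D
      rwa [hDH] at this
    set B : Matrix n n ℝ := D * A * D with hBdef
    have hBdiag : ∀ i, B i i = 1 := by
      intro i
      simp only [hBdef, hD, Matrix.diagonal_mul, Matrix.mul_diagonal]
      rw [div_mul_eq_mul_div, one_mul, div_mul_eq_mul_div, mul_one_div, div_div]
      rw [Real.mul_self_sqrt (le_of_lt (hdiag i))]
      exact div_self (ne_of_gt (hdiag i))
    have htr : ∑ i, hB.1.eigenvalues i = (Fintype.card n : ℝ) := by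
      rw [← trace_eq_sum_eig hB.1, Matrix.trace]
      simp only [Matrix.diag_apply, hBdiag]
      simp [Finset.card_univ]
    have hdet : B.det = ∏ i, hB.1.eigenvalues i := by
      have := hB.1.det_eq_prod_eigenvalues
      simpa using this
    have hμ : ∀ i, 0 ≤ hB.1.eigenvalues i := hB.eigenvalues_nonneg
    have hdetB : B.det ≤ 1 := by
      rcases isEmpty_or_nonempty n with h | h
      · simp [hdet]
      · set m := Fintype.card n with hm
        have hm0 : 0 < m := Fintype.card_pos
        have hgm := Real.geom_mean_le_arith_mean_weighted Finset.univ
          (fun _ => 1 / (m : ℝ)) hB.1.eigenvalues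
          (fun i _ => by positivity)
          (by
            rw [Finset.sum_const, Finset.card_univ, ← hm, nsmul_eq_mul]
            field_simp)
          (fun i _ => hμ i)
        have hsum : ∑ i, (1 / (m : ℝ)) * hB.1.eigenvalues i = 1 := by
          rw [← Finset.mul_sum, htr]
          field_simp
        rw [hsum] at hgm
        have hrw : B.det = (∏ i, hB.1.eigenvalues i ^ (1 / (m : ℝ))) ^ m := by
          rw [← Finset.prod_pow, hdet]
          congr 1; ext i
          rw [← Real.rpow_natCast (_ ^ _) m, ← Real.rpow_mul (hμ i)]
          rw [one_div_mul_cancel (by exact_mod_cast hm0.ne'), Real.rpow_one]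
        rw [hrw]
        exact pow_le_one₀ (Finset.prod_nonneg fun i _ => Real.rpow_nonneg (hμ i) _) hgm
    -- det B = det A / ∏ a
    have hdetD : D.det = ∏ i, 1 / Real.sqrt (a i) := Matrix.det_diagonal
    have hprodpos : 0 < ∏ i, a i := Finset.prod_pos fun i _ => hdiag i
    have hdet2 : B.det = A.det / ∏ i, a i := by
      rw [hBdef, Matrix.det_mul, Matrix.det_mul, hdetD]
      rw [mul_comm, ← mul_assoc, ← Finset.prod_mul_distrib]
      have : ∀ i, (1 / Real.sqrt (a i)) * (1 / Real.sqrt (a i)) = (a i)⁻¹ := by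
        intro i
        rw [div_mul_div_comm, one_mul, Real.mul_self_sqrt (le_of_lt (hdiag i))]
        exact one_div _
      simp only [this]
      rw [Finset.prod_inv_distrib, mul_comm, div_eq_mul_inv, mul_comm]
    rw [hdet2, div_le_one hprodpos] at hdetB
    exact hdetB
  · push_neg at hdiag
    obtain ⟨i, hi⟩ := hdiag
    have hii : A i i = 0 := le_antisymm hi (by
      have := hA.dotProduct_mulVec_nonneg (Pi.single i 1)
      simpa [dotProduct, Matrix.mulVec, Pi.single_apply] using this)
    obtain ⟨C, hC⟩ : ∃ C : Matrix n n ℝ, A = Cᴴ * C := by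
      open scoped MatrixOrder in
      exact ⟨_, (CStarAlgebra.nonneg_iff_eq_star_mul_self.mp hA.nonneg).choose_spec⟩
    have hcol : ∀ k, C k i = 0 := by
      intro k
      have h0 : ∑ k, C k i * C k i = 0 := by
        have := congrArg (fun M => M i i) hC
        simp only [Matrix.mul_apply, Matrix.conjTranspose_apply, star_trivial] at this
        rw [hii] at this
        exact this.symm
      have := Finset.sum_eq_zero_iff_of_nonneg (fun k _ => mul_self_nonneg (C k i)) |>.mp h0 k
        (Finset.mem_univ k)
      exact mul_self_eq_zero.mp this
    have hdetC : C.det = 0 := Matrix.det_eq_zero_of_column_eq_zero i hcol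
    have : A.det = 0 := by
      rw [hC, Matrix.det_mul, hdetC, mul_zero]
    rw [this]
    refine Finset.prod_nonneg fun j _ => ?_
    have := hA.dotProduct_mulVec_nonneg (Pi.single j 1)
    simpa [dotProduct, Matrix.mulVec, Pi.single_apply] using this

lemma psd_vecMulVec {n : Type*} [Fintype n] (v : n → ℝ) :
    (Matrix.vecMulVec v v).PosSemidef := by
  refine Matrix.PosSemidef.of_dotProduct_mulVec_nonneg ?_ ?_
  · ext i j
    simp [Matrix.vecMulVec_apply, Matrix.conjTranspose_apply, mul_comm]
  · intro x
    have key : star x ⬝ᵥ (Matrix.vecMulVec v v *ᵥ x) = (v ⬝ᵥ x) * (v ⬝ᵥ x) := by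
      simp only [dotProduct, Matrix.mulVec, Matrix.vecMulVec_apply, star_trivial]
      rw [Finset.sum_mul_sum]
      exact Finset.sum_congr rfl fun i _ => by
        rw [Finset.mul_sum]
        exact Finset.sum_congr rfl fun j _ => by ring
    rw [key]
    exact mul_self_nonneg _


set_option maxHeartbeats 1000000 in
/-- Lemma 5 (Lemma 7 of Valko et al. 2014): with `Λ` diagonal with entries
`0 < λ = λ_1 ≤ … ≤ λ_N`, vectors `b_τ` of Euclidean norm at most `1`,
`B_t = Λ + ∑_{τ=1}^{t-1} b_τ b_τᵀ` and `d` the effective dimension, for every `t ≤ T + 1`,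
`ln(det(B_t)/det(Λ)) ≤ 2 d ln(1 + T/λ)`. -/
theorem log_det_ratio_effective_dim
    (N T : ℕ) (hT : 1 ≤ T) (lam : ℕ → ℝ) (hpos : 0 < lam 1)
    (hmono : ∀ i j, 1 ≤ i → i ≤ j → j ≤ N → lam i ≤ lam j)
    (Λ : Matrix (Fin N) (Fin N) ℝ)
    (hΛ : Λ = Matrix.diagonal (fun i : Fin N => lam (i.1 + 1)))
    (b : ℕ → (Fin N → ℝ))
    (hb : ∀ τ, 1 ≤ τ → τ ≤ T → Real.sqrt (b τ ⬝ᵥ b τ) ≤ 1)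
    (B : ℕ → Matrix (Fin N) (Fin N) ℝ)
    (hB : ∀ t, B t = Λ + ∑ τ ∈ Finset.Icc 1 (t - 1), Matrix.vecMulVec (b τ) (b τ))
    (d : ℕ) (hd1 : 1 ≤ d) (hdN : d ≤ N)
    (hdcond : ((d : ℝ) - 1) * lam d ≤ T / Real.log (1 + T / lam 1))
    (hdmax : ∀ d', 1 ≤ d' → d' ≤ N →
      ((d' : ℝ) - 1) * lam d' ≤ T / Real.log (1 + T / lam 1) → d' ≤ d)
    (t : ℕ) (ht : t ≤ T + 1) :
    Real.log ((B t).det / Λ.det) ≤ 2 * d * Real.log (1 + T / lam 1) := by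
  have hN : 1 ≤ N := hd1.trans hdN
  set L := Real.log (1 + (T : ℝ) / lam 1) with hLdef
  have hTpos : (0 : ℝ) < T := by exact_mod_cast hT
  have hL : 0 < L := Real.log_pos (by
    have : 0 < (T : ℝ) / lam 1 := div_pos hTpos hpos
    linarith)
  -- basic entries
  have hlpos : ∀ i : Fin N, 0 < lam (i.1 + 1) := fun i =>
    lt_of_lt_of_le hpos (hmono 1 (i.1 + 1) le_rfl (by omega) (by omega))
  set m : Fin N → ℝ := fun i => ∑ τ ∈ Finset.Icc 1 (t - 1), (b τ i) ^ 2 with hmdef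
  have hm0 : ∀ i, 0 ≤ m i := fun i => Finset.sum_nonneg fun τ _ => sq_nonneg _
  have hBdiag : ∀ i : Fin N, (B t) i i = lam (i.1 + 1) + m i := by
    intro i
    rw [hB, hΛ]
    simp [Matrix.add_apply, Matrix.sum_apply, Matrix.vecMulVec_apply, hmdef, sq]
  -- positivity of matrices
  have hΛpd : Λ.PosDef := by
    rw [hΛ]
    exact Matrix.posDef_diagonal_iff.mpr fun i => hlpos i
  have hSpsd : (∑ τ ∈ Finset.Icc 1 (t - 1), Matrix.vecMulVec (b τ) (b τ)).PosSemidef := by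
    apply Finset.sum_induction _ _ (fun A B hA hB => hA.add hB) Matrix.PosSemidef.zero
    exact fun τ _ => psd_vecMulVec (b τ)
  have hBpd : (B t).PosDef := by
    rw [hB]
    exact hΛpd.add_posSemidef hSpsd
  have hdetΛ : Λ.det = ∏ i : Fin N, lam (i.1 + 1) := by
    rw [hΛ, Matrix.det_diagonal]
  have hPpos : 0 < ∏ i : Fin N, lam (i.1 + 1) :=
    Finset.prod_pos fun i _ => hlpos i
  have hdetΛpos : 0 < Λ.det := hdetΛ ▸ hPpos
  -- total mass bound
  have hsum_m : ∑ i, m i ≤ (T : ℝ) := by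
    have hswap : ∑ i, m i = ∑ τ ∈ Finset.Icc 1 (t - 1), ∑ i : Fin N, (b τ i) ^ 2 :=
      Finset.sum_comm
    rw [hswap]
    have hterm : ∀ τ ∈ Finset.Icc 1 (t - 1), ∑ i : Fin N, (b τ i) ^ 2 ≤ 1 := by
      intro τ hτ
      rw [Finset.mem_Icc] at hτ
      have hτT : τ ≤ T := le_trans hτ.2 (by omega)
      have hdp : b τ ⬝ᵥ b τ = ∑ i : Fin N, (b τ i) ^ 2 := by
        simp [dotProduct, sq]
      have hnn : 0 ≤ b τ ⬝ᵥ b τ := hdp ▸ Finset.sum_nonneg fun i _ => sq_nonneg _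
      have hs := hb τ hτ.1 hτT
      have := Real.sq_sqrt hnn
      nlinarith [Real.sqrt_nonneg (b τ ⬝ᵥ b τ)]
    calc ∑ τ ∈ Finset.Icc 1 (t - 1), ∑ i : Fin N, (b τ i) ^ 2
        ≤ ∑ _τ ∈ Finset.Icc 1 (t - 1), (1 : ℝ) := Finset.sum_le_sum hterm
      _ = ((t - 1 : ℕ) : ℝ) := by simp [Nat.card_Icc]
      _ ≤ (T : ℝ) := by exact_mod_cast Nat.sub_le_of_le_add ht
  have hmT : ∀ i, m i ≤ (T : ℝ) := fun i =>
    le_trans (Finset.single_le_sum (fun j _ => hm0 j) (Finset.mem_univ i)) hsum_m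
  -- step 1: log ratio ≤ sum of logs
  set f : Fin N → ℝ := fun i => Real.log (1 + m i / lam (i.1 + 1)) with hfdef
  have hfact : ∀ i : Fin N, (0 : ℝ) < 1 + m i / lam (i.1 + 1) := fun i => by
    have := div_nonneg (hm0 i) (hlpos i).le
    linarith
  have step1 : Real.log ((B t).det / Λ.det) ≤ ∑ i, f i := by
    have hHad : (B t).det ≤ ∏ i : Fin N, (lam (i.1 + 1) + m i) := by
      have := det_le_prod_diag hBpd.posSemidef
      calc (B t).det ≤ ∏ i, (B t) i i := this
        _ = ∏ i : Fin N, (lam (i.1 + 1) + m i) :=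
            Finset.prod_congr rfl fun i _ => hBdiag i
    have hratio : (B t).det / Λ.det ≤ ∏ i : Fin N, (1 + m i / lam (i.1 + 1)) := by
      rw [hdetΛ]
      rw [div_le_iff₀ hPpos]
      calc (B t).det ≤ ∏ i : Fin N, (lam (i.1 + 1) + m i) := hHad
        _ = (∏ i : Fin N, (1 + m i / lam (i.1 + 1))) * ∏ i : Fin N, lam (i.1 + 1) := by
            rw [← Finset.prod_mul_distrib]
            refine Finset.prod_congr rfl fun i _ => ?_
            rw [add_mul, one_mul, div_mul_cancel₀ _ (hlpos i).ne']
    have hlog := Real.log_le_log (div_pos hBpd.det_pos hdetΛpos) hratio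
    rw [Real.log_prod (fun i _ => (hfact i).ne')] at hlog
    exact hlog
  refine le_trans step1 ?_
  -- step 2: bound the sum, splitting at d
  have hf_nonneg : ∀ i, 0 ≤ f i := fun i => Real.log_nonneg (by
    have := div_nonneg (hm0 i) (hlpos i).le
    linarith)
  have hfL : ∀ i : Fin N, f i ≤ L := by
    intro i
    apply Real.log_le_log (hfact i)
    have h1 : m i / lam (i.1 + 1) ≤ (T : ℝ) / lam 1 :=
      div_le_div₀ hTpos.le (hmT i) hpos (hmono 1 (i.1 + 1) le_rfl (by omega) (by omega))
    linarith
  set g : ℕ → ℝ := fun j => if h : j < N then f ⟨j, h⟩ else 0 with hgdef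
  set M : ℕ → ℝ := fun j => if h : j < N then m ⟨j, h⟩ else 0 with hMdef
  have hsum_eq : ∑ i : Fin N, f i = ∑ j ∈ Finset.range N, g j := by
    rw [← Fin.sum_univ_eq_sum_range]
    refine Finset.sum_congr rfl fun i _ => ?_
    simp [hgdef, i.isLt]
  rw [hsum_eq]
  have hsplit : ∑ j ∈ Finset.range N, g j =
      (∑ j ∈ Finset.Ico 0 d, g j) + ∑ j ∈ Finset.Ico d N, g j := by
    rw [Finset.range_eq_Ico, ← Finset.sum_Ico_consecutive g (Nat.zero_le d) hdN]
  rw [hsplit]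
  have hpart1 : ∑ j ∈ Finset.Ico 0 d, g j ≤ (d : ℝ) * L := by
    calc ∑ j ∈ Finset.Ico 0 d, g j ≤ ∑ _j ∈ Finset.Ico 0 d, L := by
          refine Finset.sum_le_sum fun j hj => ?_
          rw [Finset.mem_Ico] at hj
          have hjN : j < N := lt_of_lt_of_le hj.2 hdN
          simp only [hgdef, dif_pos hjN]
          exact hfL _
      _ = (d : ℝ) * L := by simp [Nat.card_Ico]
  have hpart2 : ∑ j ∈ Finset.Ico d N, g j ≤ (d : ℝ) * L := by
    rcases eq_or_lt_of_le hdN with heq | hlt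
    · rw [heq]
      simp
      positivity
    · -- d < N, use maximality
      have hlam_d1 : 0 < lam (d + 1) :=
        lt_of_lt_of_le hpos (hmono 1 (d + 1) le_rfl (by omega) (by omega))
      have hmaxviol : (T : ℝ) / L < (d : ℝ) * lam (d + 1) := by
        by_contra hcon
        push_neg at hcon
        have := hdmax (d + 1) (by omega) (by omega) (by push_cast; linarith)
        omega
      have hkey : (T : ℝ) / lam (d + 1) < (d : ℝ) * L := by
        rw [div_lt_iff₀ hlam_d1]
        rw [div_lt_iff₀ hL] at hmaxviol
        nlinarith
      have hbound : ∑ j ∈ Finset.Ico d N, g j ≤ (T : ℝ) / lam (d + 1) := by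
        have hstep : ∀ j ∈ Finset.Ico d N, g j ≤ M j / lam (d + 1) := by
          intro j hj
          rw [Finset.mem_Ico] at hj
          have hjN : j < N := hj.2
          simp only [hgdef, hMdef, dif_pos hjN]
          have hlam_j : 0 < lam (j + 1) :=
            lt_of_lt_of_le hpos (hmono 1 (j + 1) le_rfl (by omega) (by omega))
          have h1 : f ⟨j, hjN⟩ ≤ m ⟨j, hjN⟩ / lam (j + 1) := by
            have hx : (0 : ℝ) < 1 + m ⟨j, hjN⟩ / lam (j + 1) := hfact ⟨j, hjN⟩
            have := Real.log_le_sub_one_of_pos hx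
            simpa [hfdef] using this
          have h2 : m ⟨j, hjN⟩ / lam (j + 1) ≤ m ⟨j, hjN⟩ / lam (d + 1) :=
            div_le_div_of_nonneg_left (hm0 _) hlam_d1
              (hmono (d + 1) (j + 1) (by omega) (by omega) (by omega))
          exact le_trans h1 h2
        calc ∑ j ∈ Finset.Ico d N, g j ≤ ∑ j ∈ Finset.Ico d N, M j / lam (d + 1) :=
              Finset.sum_le_sum hstep
          _ = (∑ j ∈ Finset.Ico d N, M j) / lam (d + 1) := by
              rw [Finset.sum_div]
          _ ≤ (T : ℝ) / lam (d + 1) := by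
              have hMnn : ∀ j, 0 ≤ M j := by
                intro j
                by_cases h : j < N
                · simp only [hMdef, dif_pos h]; exact hm0 _
                · simp only [hMdef, dif_neg h]; exact le_rfl
              have h1 : ∑ j ∈ Finset.Ico d N, M j ≤ ∑ j ∈ Finset.range N, M j := by
                apply Finset.sum_le_sum_of_subset_of_nonneg
                · intro x hx
                  rw [Finset.mem_Ico] at hx
                  exact Finset.mem_range.mpr hx.2
                · exact fun j _ _ => hMnn j
              have h2 : ∑ j ∈ Finset.range N, M j = ∑ i : Fin N, m i := by
                rw [← Fin.sum_univ_eq_sum_range]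
                exact Finset.sum_congr rfl fun i _ => by simp [hMdef, i.isLt]
              have h3 : ∑ j ∈ Finset.Ico d N, M j ≤ (T : ℝ) := by linarith
              exact (div_le_div_iff_of_pos_right hlam_d1).mpr h3
      linarith
  have hd1' : (1 : ℝ) ≤ d := by exact_mod_cast hd1
  calc (∑ j ∈ Finset.Ico 0 d, g j) + ∑ j ∈ Finset.Ico d N, g j
      ≤ (d : ℝ) * L + (d : ℝ) * L := add_le_add hpart1 hpart2
    _ = 2 * d * L := by ring
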